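/- For every integer m ≥ 1 and every real a with (m+1)/(m+2) < a < 1, the inequality -ln(1-x) ≤ x + x²/2 + ... + xᵐ/m + x^(m+1)/((m+1)(1-ax)) holds for all x with 0 ≤ x ≤ b, where b = (m+1-(m+2)a)/(a(m-(m+1)a)). -/

import Mathlib

theorem stmt_2 (m : ℕ) (hm : 1 ≤ m) (a : ℝ)
    (ha1 : ((m : ℝ) + 1) / ((m : ℝ) + 2) < a) (ha2 : a < 1) :
    ∀ x : ℝ, 0 ≤ x →
      x ≤ ((m : ℝ) + 1 - ((m : ℝ) + 2) * a) / (a * ((m : ℝ) - ((m : ℝ) + 1) * a)) →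
      -Real.log (1 - x) ≤ (∑ k ∈ Finset.Icc 1 m, x ^ k / (k : ℝ))
        + x ^ (m + 1) / (((m : ℝ) + 1) * (1 - a * x)) := by
  intro x hx0 hxb
  set M : ℝ := (m : ℝ) with hMdef
  set b : ℝ := (M + 1 - (M + 2) * a) / (a * (M - (M + 1) * a)) with hbdef
  have hM1 : (1:ℝ) ≤ M := by rw [hMdef]; exact_mod_cast hm
  have hM2 : (0:ℝ) < M + 2 := by linarith
  have ha0 : 0 < a := lt_trans (by positivity) ha1
  have hkey1 : M + 1 < a * (M + 2) := by
    rw [div_lt_iff₀ hM2] at ha1; linarith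
  have hpos : 0 < (M + 1) * a - M := by nlinarith
  have hD : a * (M - (M + 1) * a) < 0 := by nlinarith
  have hnum : M + 1 - (M + 2) * a < 0 := by linarith
  have hb0 : 0 ≤ b := div_nonneg_of_nonpos hnum.le hD.le
  -- facts at any point of [0, b]
  have facts : ∀ y : ℝ, 0 ≤ y → y ≤ b →
      0 < 1 - y ∧ 0 < 1 - a * y ∧
        0 ≤ (M + 2) * a - (M + 1) + y * (a * (M - (M + 1) * a)) := by
    intro y hy0 hyb
    have hK : M + 1 - (M + 2) * a ≤ y * (a * (M - (M + 1) * a)) := by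
      rwa [le_div_iff_of_neg hD] at hyb
    have h1y : 0 < 1 - y := by nlinarith [sq_nonneg (1 - a), mul_pos ha0 hpos]
    have h1ay : 0 < 1 - a * y := by nlinarith
    exact ⟨h1y, h1ay, by linarith⟩
  -- the function and its derivative
  set F : ℝ → ℝ := fun y => (∑ k ∈ Finset.Icc 1 m, y ^ k / (k : ℝ))
      + y ^ (m + 1) / ((M + 1) * (1 - a * y)) + Real.log (1 - y) with hFdef
  set F' : ℝ → ℝ := fun y => (∑ k ∈ Finset.Icc 1 m, y ^ (k - 1))
      + (y ^ m * ((M + 1) - M * a * y)) / ((M + 1) * (1 - a * y) ^ 2) - 1 / (1 - y)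
      with hF'def
  have hM1pos : (0:ℝ) < M + 1 := by linarith
  have hder : ∀ y ∈ Set.Icc (0:ℝ) b, HasDerivAt F (F' y) y := by
    intro y hy
    obtain ⟨h1y, h1ay, _⟩ := facts y hy.1 hy.2
    have hsum : HasDerivAt (fun z : ℝ => ∑ k ∈ Finset.Icc 1 m, z ^ k / (k : ℝ))
        (∑ k ∈ Finset.Icc 1 m, y ^ (k - 1)) y := by
      apply HasDerivAt.fun_sum
      intro k hk
      have hk1 : 1 ≤ k := (Finset.mem_Icc.mp hk).1
      have hkne : (k : ℝ) ≠ 0 := Nat.cast_ne_zero.mpr (by omega)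
      have h := (hasDerivAt_pow k y).div_const (k : ℝ)
      refine h.congr_deriv ?_
      exact mul_div_cancel_left₀ _ hkne
    have hvne : (M + 1) * (1 - a * y) ≠ 0 := by positivity
    have hv : HasDerivAt (fun z : ℝ => (M + 1) * (1 - a * z)) ((M + 1) * (-a)) y := by
      have : HasDerivAt (fun z : ℝ => 1 - a * z) (-(a * 1)) y :=
        ((hasDerivAt_id y).const_mul a).const_sub 1
      simpa using this.const_mul (M + 1)
    have hu : HasDerivAt (fun z : ℝ => z ^ (m + 1)) ((m + 1 : ℕ) * y ^ m) y := by
      simpa using hasDerivAt_pow (m + 1) y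
    have hG : HasDerivAt (fun z : ℝ => z ^ (m + 1) / ((M + 1) * (1 - a * z)))
        ((y ^ m * ((M + 1) - M * a * y)) / ((M + 1) * (1 - a * y) ^ 2)) y := by
      have := hu.div hv hvne
      refine this.congr_deriv ?_
      have h2 : (1 - a * y) ≠ 0 := ne_of_gt h1ay
      have h3 : (M + 1) ≠ 0 := ne_of_gt hM1pos
      have hc : ((m + 1 : ℕ) : ℝ) = M + 1 := by rw [hMdef]; push_cast; ring
      rw [hc, div_eq_div_iff (pow_ne_zero 2 hvne) (mul_ne_zero h3 (pow_ne_zero 2 h2))]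
      ring
    have hlog : HasDerivAt (fun z : ℝ => Real.log (1 - z)) (-(1 / (1 - y))) y := by
      have h1 : HasDerivAt (fun z : ℝ => 1 - z) (-1) y := (hasDerivAt_id y).const_sub 1
      have := (Real.hasDerivAt_log (ne_of_gt h1y)).comp y h1
      refine this.congr_deriv ?_
      ring
    have := (hsum.add hG).add hlog
    exact this.congr_deriv (by simp only [hF'def]; ring)
  have hF0 : F 0 = 0 := by
    simp [hFdef]
    apply Finset.sum_eq_zero
    intro k hk
    have hk1 : 1 ≤ k := (Finset.mem_Icc.mp hk).1
    rw [zero_pow (by omega)]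
    simp
  have hmono : MonotoneOn F (Set.Icc 0 b) := by
    apply monotoneOn_of_deriv_nonneg (convex_Icc 0 b)
    · exact fun y hy => (hder y hy).continuousAt.continuousWithinAt
    · rw [interior_Icc]
      exact fun y hy =>
        ((hder y (Set.Ioo_subset_Icc_self hy)).differentiableAt).differentiableWithinAt
    · rw [interior_Icc]
      intro y hy
      rw [(hder y (Set.Ioo_subset_Icc_self hy)).deriv]
      obtain ⟨h1y, h1ay, hbr⟩ := facts y hy.1.le hy.2.le
      have hy0 : (0:ℝ) ≤ y := hy.1.le
      have key : (M + 1) * (1 - a * y) ^ 2 ≤ ((M + 1) - M * a * y) * (1 - y) := by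
        nlinarith [mul_nonneg hy0 hbr]
      have hyne : y ≠ 1 := by linarith
      have hsumeq : ∑ k ∈ Finset.Icc 1 m, y ^ (k - 1) = ∑ j ∈ Finset.range m, y ^ j := by
        rw [show Finset.Icc 1 m = Finset.Ico 1 (m+1) by rw [Finset.Ico_add_one_right_eq_Icc],
          Finset.sum_Ico_eq_sum_range]
        simp
      simp only [hF'def]
      rw [hsumeq, geom_sum_eq hyne]
      have hden2 : 0 < (M + 1) * (1 - a * y) ^ 2 := by positivity
      have hne1 : y - 1 ≠ 0 := by linarith
      have hne2 : 1 - y ≠ 0 := ne_of_gt h1y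
      have e1 : (y ^ m - 1) / (y - 1) - 1 / (1 - y) = -(y ^ m / (1 - y)) := by
        field_simp
        ring
      have e2 : y ^ m / (1 - y) ≤ (y ^ m * ((M + 1) - M * a * y)) / ((M + 1) * (1 - a * y) ^ 2) := by
        rw [div_le_div_iff₀ h1y hden2]
        nlinarith [mul_le_mul_of_nonneg_left key (pow_nonneg hy0 m)]
      linarith [e2, e1.ge, e1.le]
  have h0mem : (0:ℝ) ∈ Set.Icc (0:ℝ) b := ⟨le_refl 0, hb0⟩
  have hxmem : x ∈ Set.Icc (0:ℝ) b := ⟨hx0, hxb⟩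
  have := hmono h0mem hxmem hx0
  rw [hF0] at this
  simp only [hFdef] at this
  linarith
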